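/- (Same-sender delivery Lemma) In any execution of Algorithm 1, if a process p_i toco-broadcasts a message m1 and later toco-broadcasts a message m2, then any process p_j that toco-delivers m2 must have toco-delivered m1 before m2. -/

import Mathlib

/-!
Operational model of Algorithm 1 (the `G`-fisheye (SC,CC)-broadcast algorithm).

`n` sequential asynchronous processes `p_0, …, p_{n-1}` (type `Fin n`) exchange
application messages of type `M` through reliable FIFO channels (one queue per
ordered pair of processes).  A proximity graph is a `SimpleGraph (Fin n)`.
-/

namespace Fisheye

/-- A tuple `⟨m, s_caus, s_tot, sender⟩`, as carried by `TOCOBC` protocol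
messages and as stored in the `pending` sets of Algorithm 1. -/
structure Tuple (n : ℕ) (M : Type) where
  msg : M
  scaus : Fin n → ℕ
  stot : ℕ
  sender : Fin n

/-- Protocol messages of Algorithm 1. -/
inductive PMsg (n : ℕ) (M : Type) where
  | tocobc (tp : Tuple n M)
  | catchup (d : ℕ) (sender : Fin n)

/-- Local state of a process: the vector clock `causal_i[1..n]`, the vector of
logical clock values `total_i[1..n]`, and the set `pending_i`. -/
structure ProcState (n : ℕ) (M : Type) where
  causal : Fin n → ℕ
  total : Fin n → ℕ
  pending : Set (Tuple n M)

/-- Global configuration: local states plus channel contents.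
`chan j i` is the FIFO queue of protocol messages in transit from `p_j`
to `p_i` (head = oldest message). -/
structure Config (n : ℕ) (M : Type) where
  proc : Fin n → ProcState n M
  chan : Fin n → Fin n → List (PMsg n M)

/-- Initially all clocks are `0`, all pending sets and channels are empty. -/
def initConfig (n : ℕ) (M : Type) : Config n M where
  proc := fun _ => { causal := fun _ => 0, total := fun _ => 0, pending := ∅ }
  chan := fun _ _ => []

/-- Lexicographic strict order on timestamps `⟨s_tot, sender⟩`. -/
def tsLt {n : ℕ} (x y : ℕ × Fin n) : Prop :=
  x.1 < y.1 ∨ (x.1 = y.1 ∧ x.2 < y.2)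

/-- Lexicographic (reflexive) order on timestamps. -/
def tsLe {n : ℕ} (x y : ℕ × Fin n) : Prop := tsLt x y ∨ x = y

/-- The set `C` at process `p_i`: pending tuples whose causal timestamp is
pointwise `≤ causal_i[·]`. -/
def inC {n : ℕ} {M : Type} (c : Config n M) (i : Fin n) (tp : Tuple n M) : Prop :=
  tp ∈ (c.proc i).pending ∧ ∀ k, tp.scaus k ≤ (c.proc i).causal k

/-- The set `T1` at `p_i`: tuples of `C` whose sender `p_j` satisfies
`⟨total_i[k], k⟩ > ⟨s_tot, j⟩` for every neighbor `p_k` of `p_j` in `G`. -/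
def inT1 {n : ℕ} {M : Type} (G : SimpleGraph (Fin n)) (c : Config n M) (i : Fin n)
    (tp : Tuple n M) : Prop :=
  inC c i tp ∧ ∀ k, G.Adj tp.sender k → tsLt (tp.stot, tp.sender) ((c.proc i).total k, k)

/-- The set `T2` at `p_i`: tuples of `T1` such that every pending tuple whose
sender is a neighbor of `p_j` has a (lexicographically) larger timestamp. -/
def inT2 {n : ℕ} {M : Type} (G : SimpleGraph (Fin n)) (c : Config n M) (i : Fin n)
    (tp : Tuple n M) : Prop :=
  inT1 G c i tp ∧ ∀ tp' ∈ (c.proc i).pending, G.Adj tp.sender tp'.sender →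
    tsLt (tp.stot, tp.sender) (tp'.stot, tp'.sender)

/-- Transition labels: `p_i` toco-broadcasts `m`; `p_i` receives the head
`TOCOBC` (resp. `CATCH_UP`) message of the channel from `p_j`; `p_i`
toco-delivers the message of the pending tuple `tp`. -/
inductive Label (n : ℕ) (M : Type) where
  | broadcast (i : Fin n) (m : M)
  | recvToco (i j : Fin n)
  | recvCatchup (i j : Fin n)
  | deliver (i : Fin n) (tp : Tuple n M)

/-- The transition relation of Algorithm 1. -/
inductive Step {n : ℕ} {M : Type} (G : SimpleGraph (Fin n)) :
    Config n M → Label n M → Config n M → Prop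
  /-- `TOCO_broadcast(m)` at `p_i`: increment `total_i[i]`, send
  `TOCOBC(m, ⟨causal_i[·], total_i[i], i⟩)` to every other process, add it to
  `pending_i`, and increment `causal_i[i]`. -/
  | broadcast (c : Config n M) (i : Fin n) (m : M) :
      Step G c (.broadcast i m)
        { proc := Function.update c.proc i
            { causal := Function.update (c.proc i).causal i ((c.proc i).causal i + 1)
              total := Function.update (c.proc i).total i ((c.proc i).total i + 1)
              pending := insert ⟨m, (c.proc i).causal, (c.proc i).total i + 1, i⟩
                           (c.proc i).pending }
          chan := fun a b =>
            if a = i ∧ b ≠ i then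
              c.chan a b ++ [PMsg.tocobc ⟨m, (c.proc i).causal, (c.proc i).total i + 1, i⟩]
            else c.chan a b }
  /-- Reception by `p_i` of the head `TOCOBC(m, ⟨s_caus, s_tot, sender⟩)` of the
  channel from `p_j`: add the tuple to `pending_i`, set `total_i[sender] := s_tot`,
  and if `total_i[i] ≤ s_tot`, set `total_i[i] := s_tot + 1` and send
  `CATCH_UP(total_i[i], i)` to every other process. -/
  | recvToco (c : Config n M) (i j : Fin n) (tp : Tuple n M) (rest : List (PMsg n M))
      (hhead : c.chan j i = PMsg.tocobc tp :: rest) :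
      Step G c (.recvToco i j)
        { proc := Function.update c.proc i
            { causal := (c.proc i).causal
              total :=
                if (c.proc i).total i ≤ tp.stot then
                  Function.update (Function.update (c.proc i).total tp.sender tp.stot) i
                    (tp.stot + 1)
                else Function.update (c.proc i).total tp.sender tp.stot
              pending := insert tp (c.proc i).pending }
          chan := fun a b =>
            if a = j ∧ b = i then rest
            else if (c.proc i).total i ≤ tp.stot ∧ a = i ∧ b ≠ i then
              c.chan a b ++ [PMsg.catchup (tp.stot + 1) i]
            else c.chan a b }
  /-- Reception by `p_i` of the head `CATCH_UP(d, s)` of the channel from `p_j`: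
  set `total_i[s] := d`. -/
  | recvCatchup (c : Config n M) (i j : Fin n) (d : ℕ) (s : Fin n) (rest : List (PMsg n M))
      (hhead : c.chan j i = PMsg.catchup d s :: rest) :
      Step G c (.recvCatchup i j)
        { proc := Function.update c.proc i
            { causal := (c.proc i).causal
              total := Function.update (c.proc i).total s d
              pending := (c.proc i).pending }
          chan := fun a b => if a = j ∧ b = i then rest else c.chan a b }
  /-- The background task at `p_i`: toco-deliver the message of a tuple of `T2`
  with lexicographically minimal timestamp `⟨s_tot, sender⟩`, remove it from
  `pending_i`, and (if its sender is not `p_i`) increment `causal_i[sender]`. -/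
  | deliver (c : Config n M) (i : Fin n) (tp : Tuple n M)
      (hT2 : inT2 G c i tp)
      (hmin : ∀ tp', inT2 G c i tp' → tsLe (tp.stot, tp.sender) (tp'.stot, tp'.sender)) :
      Step G c (.deliver i tp)
        { proc := Function.update c.proc i
            { causal :=
                if tp.sender = i then (c.proc i).causal
                else Function.update (c.proc i).causal tp.sender
                       ((c.proc i).causal tp.sender + 1)
              total := (c.proc i).total
              pending := (c.proc i).pending \ {tp} }
          chan := c.chan }

/-- Either a stuttering step (no transition) or a step of Algorithm 1. -/
def OptStep {n : ℕ} {M : Type} (G : SimpleGraph (Fin n)) (c : Config n M) :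
    Option (Label n M) → Config n M → Prop
  | none, c' => c' = c
  | some l, c' => Step G c l c'

/-- An execution of Algorithm 1: an infinite sequence of configurations starting
in the initial configuration, each obtained from the previous one by (at most)
one transition.  Toco-broadcast (application) messages are assumed unique: no
message is toco-broadcast twice. -/
structure Execution (n : ℕ) (M : Type) (G : SimpleGraph (Fin n)) where
  cfg : ℕ → Config n M
  lbl : ℕ → Option (Label n M)
  init : cfg 0 = initConfig n M
  steps : ∀ t, OptStep G (cfg t) (lbl t) (cfg (t + 1))
  uniqueBcast : ∀ (m : M) (i i' : Fin n) (t t' : ℕ),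
    lbl t = some (.broadcast i m) → lbl t' = some (.broadcast i' m) → t = t'

/-- `p_i` toco-broadcasts `m` at time `t`. -/
def Execution.broadcastsAt {n : ℕ} {M : Type} {G : SimpleGraph (Fin n)}
    (e : Execution n M G) (i : Fin n) (m : M) (t : ℕ) : Prop :=
  e.lbl t = some (.broadcast i m)

/-- `p_i` toco-delivers `m` at time `t`. -/
def Execution.deliversAt {n : ℕ} {M : Type} {G : SimpleGraph (Fin n)}
    (e : Execution n M G) (i : Fin n) (m : M) (t : ℕ) : Prop :=
  ∃ tp : Tuple n M, tp.msg = m ∧ e.lbl t = some (.deliver i tp)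

/-- The message causal order `⇝_M` of the execution: generated by (i) `m1`
toco-broadcast before `m2` by the same process, (ii) `m1` toco-delivered by a
process before that process toco-broadcasts `m2`, and transitivity. -/
inductive Execution.MsgCausal {n : ℕ} {M : Type} {G : SimpleGraph (Fin n)}
    (e : Execution n M G) : M → M → Prop
  | sameProc {i : Fin n} {m1 m2 : M} {t1 t2 : ℕ} :
      t1 < t2 → e.broadcastsAt i m1 t1 → e.broadcastsAt i m2 t2 → e.MsgCausal m1 m2
  | delivered {i : Fin n} {m1 m2 : M} {t1 t2 : ℕ} :
      t1 < t2 → e.deliversAt i m1 t1 → e.broadcastsAt i m2 t2 → e.MsgCausal m1 m2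
  | trans {m1 m2 m3 : M} : e.MsgCausal m1 m2 → e.MsgCausal m2 m3 → e.MsgCausal m1 m3

/-- The delivery condition of the background task of `p_i` is enabled. -/
def Deliverable {n : ℕ} {M : Type} (G : SimpleGraph (Fin n)) (e : Execution n M G)
    (i : Fin n) (t : ℕ) : Prop :=
  ∃ tp : Tuple n M, inT2 G (e.cfg t) i tp

/-- Fairness assumptions of the model: channels are reliable (a protocol message
in transit is eventually received) and the background task of each process is
eventually executed whenever it stays enabled. -/
structure Fair {n : ℕ} {M : Type} {G : SimpleGraph (Fin n)} (e : Execution n M G) : Prop where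
  recvFair : ∀ t (i j : Fin n), (e.cfg t).chan j i ≠ [] →
    ∃ t', t ≤ t' ∧ (e.lbl t' = some (.recvToco i j) ∨ e.lbl t' = some (.recvCatchup i j))
  deliverFair : ∀ t (i : Fin n), (∀ t', t ≤ t' → Deliverable G e i t') →
    ∃ t', t ≤ t' ∧ ∃ tp : Tuple n M, e.lbl t' = some (.deliver i tp)

end Fisheye

namespace Fisheye



variable {n : ℕ} {M : Type} {G : SimpleGraph (Fin n)}

/-- Resulting configuration of a broadcast step. -/
def bcastCfg (c : Config n M) (i : Fin n) (m : M) : Config n M where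
  proc := Function.update c.proc i
    { causal := Function.update (c.proc i).causal i ((c.proc i).causal i + 1)
      total := Function.update (c.proc i).total i ((c.proc i).total i + 1)
      pending := insert ⟨m, (c.proc i).causal, (c.proc i).total i + 1, i⟩
                   (c.proc i).pending }
  chan := fun a b =>
    if a = i ∧ b ≠ i then
      c.chan a b ++ [PMsg.tocobc ⟨m, (c.proc i).causal, (c.proc i).total i + 1, i⟩]
    else c.chan a b

def recvTocoCfg (c : Config n M) (i j : Fin n) (tp : Tuple n M) (rest : List (PMsg n M)) :
    Config n M where
  proc := Function.update c.proc i
    { causal := (c.proc i).causal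
      total :=
        if (c.proc i).total i ≤ tp.stot then
          Function.update (Function.update (c.proc i).total tp.sender tp.stot) i
            (tp.stot + 1)
        else Function.update (c.proc i).total tp.sender tp.stot
      pending := insert tp (c.proc i).pending }
  chan := fun a b =>
    if a = j ∧ b = i then rest
    else if (c.proc i).total i ≤ tp.stot ∧ a = i ∧ b ≠ i then
      c.chan a b ++ [PMsg.catchup (tp.stot + 1) i]
    else c.chan a b

def recvCatchCfg (c : Config n M) (i j : Fin n) (d : ℕ) (s : Fin n) (rest : List (PMsg n M)) :
    Config n M where
  proc := Function.update c.proc i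
    { causal := (c.proc i).causal
      total := Function.update (c.proc i).total s d
      pending := (c.proc i).pending }
  chan := fun a b => if a = j ∧ b = i then rest else c.chan a b

def deliverCfg (c : Config n M) (i : Fin n) (tp : Tuple n M) : Config n M where
  proc := Function.update c.proc i
    { causal :=
        if tp.sender = i then (c.proc i).causal
        else Function.update (c.proc i).causal tp.sender
               ((c.proc i).causal tp.sender + 1)
      total := (c.proc i).total
      pending := (c.proc i).pending \ {tp} }
  chan := c.chan

/-- Workhorse inversion lemma for steps. -/
lemma Step.inv {c c' : Config n M} {l : Label n M} (h : Step G c l c') :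
    (∃ i m, l = .broadcast i m ∧ c' = bcastCfg c i m) ∨
    (∃ i j tp rest, l = .recvToco i j ∧ c.chan j i = PMsg.tocobc tp :: rest ∧
      c' = recvTocoCfg c i j tp rest) ∨
    (∃ i j d s rest, l = .recvCatchup i j ∧ c.chan j i = PMsg.catchup d s :: rest ∧
      c' = recvCatchCfg c i j d s rest) ∨
    (∃ i tp, l = .deliver i tp ∧ inT2 G c i tp ∧
      (∀ tp', inT2 G c i tp' → tsLe (tp.stot, tp.sender) (tp'.stot, tp'.sender)) ∧
      c' = deliverCfg c i tp) := by
  cases h with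
  | broadcast i m => exact Or.inl ⟨i, m, rfl, rfl⟩
  | recvToco i j tp rest hh => exact Or.inr (Or.inl ⟨i, j, tp, rest, rfl, hh, rfl⟩)
  | recvCatchup i j d s rest hh => exact Or.inr (Or.inr (Or.inl ⟨i, j, d, s, rest, rfl, hh, rfl⟩))
  | deliver i tp hT2 hmin => exact Or.inr (Or.inr (Or.inr ⟨i, tp, rfl, hT2, hmin, rfl⟩))

lemma step_of_lbl (e : Execution n M G) {t : ℕ} {l : Label n M} (h : e.lbl t = some l) :
    Step G (e.cfg t) l (e.cfg (t + 1)) := by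
  have hs := e.steps t
  rw [h] at hs
  exact hs

lemma cfg_eq_of_lbl_none (e : Execution n M G) {t : ℕ} (h : e.lbl t = none) :
    e.cfg (t + 1) = e.cfg t := by
  have hs := e.steps t
  rw [h] at hs
  exact hs

lemma tsLt_of_lt_of_tsLt {a b : ℕ} {i : Fin n} {y : ℕ × Fin n} (h : a < b)
    (hy : tsLt (b, i) y) : tsLt (a, i) y := by
  rcases hy with h1 | ⟨h1, _⟩
  · exact Or.inl (h.trans h1)
  · exact Or.inl (h1 ▸ h)

/-- Per-step: causal vectors never decrease. -/
lemma causal_mono_step {c c' : Config n M} {l : Label n M} (h : Step G c l c') (j k : Fin n) :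
    (c.proc j).causal k ≤ (c'.proc j).causal k := by
  rcases h.inv with ⟨i, m, _, rfl⟩ | ⟨i, j', tp, rest, _, hh, rfl⟩ |
      ⟨i, j', d, s, rest, _, hh, rfl⟩ | ⟨i, tp, _, hT2, hmin, rfl⟩
  · by_cases hji : j = i
    · subst hji
      simp only [bcastCfg, Function.update_self, Function.update_apply]
      rcases eq_or_ne k j with rfl | hk
      · simp
      · simp [hk]
    · simp [bcastCfg, Function.update_of_ne hji]
  · by_cases hji : j = i
    · subst hji; simp [recvTocoCfg, Function.update_self]
    · simp [recvTocoCfg, Function.update_of_ne hji]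
  · by_cases hji : j = i
    · subst hji; simp [recvCatchCfg, Function.update_self]
    · simp [recvCatchCfg, Function.update_of_ne hji]
  · by_cases hji : j = i
    · subst hji
      simp only [deliverCfg, Function.update_self]
      split
      · exact le_rfl
      · simp only [Function.update_apply]
        rcases eq_or_ne k tp.sender with rfl | hk
        · simp
        · simp [hk]
    · simp [deliverCfg, Function.update_of_ne hji]

/-- Per-step: pending tuples stay pending unless delivered. -/
lemma pending_cases_step {c c' : Config n M} {l : Label n M} (h : Step G c l c') {j : Fin n}
    {tp : Tuple n M} (hm : tp ∈ (c.proc j).pending) :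
    tp ∈ (c'.proc j).pending ∨ l = .deliver j tp := by
  rcases h.inv with ⟨i, m, rfl, rfl⟩ | ⟨i, j', tp', rest, rfl, hh, rfl⟩ |
      ⟨i, j', d, s, rest, rfl, hh, rfl⟩ | ⟨i, tp', rfl, hT2, hmin, rfl⟩
  · left
    by_cases hji : j = i
    · subst hji; simp [bcastCfg, Function.update_self]; right; exact hm
    · simpa [bcastCfg, Function.update_of_ne hji] using hm
  · left
    by_cases hji : j = i
    · subst hji; simp [recvTocoCfg, Function.update_self]; right; exact hm
    · simpa [recvTocoCfg, Function.update_of_ne hji] using hm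
  · left
    by_cases hji : j = i
    · subst hji; simpa [recvCatchCfg, Function.update_self] using hm
    · simpa [recvCatchCfg, Function.update_of_ne hji] using hm
  · by_cases hji : j = i
    · subst hji
      by_cases htp : tp = tp'
      · subst htp; right; rfl
      · left; simp [deliverCfg, Function.update_self]; exact ⟨hm, htp⟩
    · left; simpa [deliverCfg, Function.update_of_ne hji] using hm

/-- `tp1` has been received (and possibly already delivered) by `p_j`. -/
def Handled (e : Execution n M G) (j : Fin n) (tp : Tuple n M) (t : ℕ) : Prop :=
  tp ∈ ((e.cfg t).proc j).pending ∨ ∃ s, s < t ∧ e.lbl s = some (.deliver j tp)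

lemma Handled.step {e : Execution n M G} {j : Fin n} {tp : Tuple n M} {t : ℕ}
    (hh : Handled e j tp t) : Handled e j tp (t + 1) := by
  rcases hh with hmem | ⟨s, hs, hl⟩
  · cases hl' : e.lbl t with
    | none =>
        left
        rw [cfg_eq_of_lbl_none e hl']
        exact hmem
    | some l =>
        rcases pending_cases_step (step_of_lbl e hl') hmem with h | h
        · exact Or.inl h
        · exact Or.inr ⟨t, Nat.lt_succ_self t, by rw [hl', h]⟩
  · exact Or.inr ⟨s, by omega, hl⟩

lemma Handled.mono {e : Execution n M G} {j : Fin n} {tp : Tuple n M} {t t' : ℕ}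
    (h : t ≤ t') (hh : Handled e j tp t) : Handled e j tp t' := by
  induction t', h using Nat.le_induction with
  | base => exact hh
  | succ t' _ ih => exact ih.step

/-- Interval monotonicity of causal vectors. -/
lemma causal_mono (e : Execution n M G) {t t' : ℕ} (h : t ≤ t') (j k : Fin n) :
    ((e.cfg t).proc j).causal k ≤ ((e.cfg t').proc j).causal k := by
  induction t', h using Nat.le_induction with
  | base => exact le_rfl
  | succ t' _ ih =>
      refine ih.trans ?_
      cases hl' : e.lbl t' with
      | none => rw [cfg_eq_of_lbl_none e hl']
      | some l => exact causal_mono_step (step_of_lbl e hl') j k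

/-- Structural well-formedness invariant of reachable configurations. -/
structure WF (e : Execution n M G) (t : ℕ) : Prop where
  chanToco : ∀ a b (tp : Tuple n M), PMsg.tocobc tp ∈ (e.cfg t).chan a b →
    tp.sender = a ∧ b ≠ a ∧ ∃ s, s < t ∧ e.lbl s = some (.broadcast a tp.msg) ∧
      tp.scaus = ((e.cfg s).proc a).causal ∧ tp.stot = ((e.cfg s).proc a).total a + 1
  chanCatch : ∀ a b d s', PMsg.catchup d s' ∈ (e.cfg t).chan a b → s' = a ∧ b ≠ a
  pend : ∀ j (tp : Tuple n M), tp ∈ ((e.cfg t).proc j).pending →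
    ∃ s, s < t ∧ e.lbl s = some (.broadcast tp.sender tp.msg) ∧
      tp.scaus = ((e.cfg s).proc tp.sender).causal ∧
      tp.stot = ((e.cfg s).proc tp.sender).total tp.sender + 1

lemma wf_all (e : Execution n M G) : ∀ t, WF e t := by
  intro t
  induction t with
  | zero =>
      constructor
      · intro a b tp h; rw [e.init] at h; simp [initConfig] at h
      · intro a b d s' h; rw [e.init] at h; simp [initConfig] at h
      · intro j tp h; rw [e.init] at h; simp [initConfig] at h
  | succ t ih =>
      cases hl : e.lbl t with
      | none =>
          have hc := cfg_eq_of_lbl_none e hl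
          constructor
          · intro a b tp h
            rw [hc] at h
            obtain ⟨h1, h2, s, hs, h3⟩ := ih.chanToco a b tp h
            exact ⟨h1, h2, s, by omega, h3⟩
          · intro a b d s' h
            rw [hc] at h
            exact ih.chanCatch a b d s' h
          · intro j tp h
            rw [hc] at h
            obtain ⟨s, hs, h3⟩ := ih.pend j tp h
            exact ⟨s, by omega, h3⟩
      | some l =>
          have hstep := step_of_lbl e hl
          rcases hstep.inv with ⟨i, m, rfl, hc⟩ | ⟨i, j', tp0, rest, rfl, hh, hc⟩ |
              ⟨i, j', d0, s0, rest, rfl, hh, hc⟩ | ⟨i, tp0, rfl, hT2, hmin, hc⟩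
          · -- broadcast
            constructor
            · intro a b tp h
              rw [hc] at h
              simp only [bcastCfg] at h
              split_ifs at h with hcond
              · obtain ⟨ha, hb⟩ := hcond
                subst ha
                rcases List.mem_append.mp h with h' | h'
                · obtain ⟨h1, h2, s, hs, h3⟩ := ih.chanToco a b tp h'
                  exact ⟨h1, h2, s, by omega, h3⟩
                · simp only [List.mem_singleton, PMsg.tocobc.injEq] at h'
                  subst h'
                  exact ⟨rfl, hb, t, Nat.lt_succ_self t, by rw [hl], rfl, rfl⟩
              · obtain ⟨h1, h2, s, hs, h3⟩ := ih.chanToco a b tp h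
                exact ⟨h1, h2, s, by omega, h3⟩
            · intro a b d s' h
              rw [hc] at h
              simp only [bcastCfg] at h
              split_ifs at h with hcond
              · rcases List.mem_append.mp h with h' | h'
                · exact ih.chanCatch a b d s' h'
                · simp at h'
              · exact ih.chanCatch a b d s' h
            · intro j tp h
              rw [hc] at h
              simp only [bcastCfg] at h
              by_cases hji : j = i
              · subst hji
                rw [Function.update_self] at h
                rcases Set.mem_insert_iff.mp h with h' | h'
                · subst h'
                  exact ⟨t, Nat.lt_succ_self t, by rw [hl], rfl, rfl⟩
                · obtain ⟨s, hs, h3⟩ := ih.pend j tp h'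
                  exact ⟨s, by omega, h3⟩
              · rw [Function.update_of_ne hji] at h
                obtain ⟨s, hs, h3⟩ := ih.pend j tp h
                exact ⟨s, by omega, h3⟩
          · -- recvToco
            have hmem0 : PMsg.tocobc tp0 ∈ (e.cfg t).chan j' i := by rw [hh]; simp
            constructor
            · intro a b tp h
              rw [hc] at h
              simp only [recvTocoCfg] at h
              split_ifs at h with h1 h2
              · have : PMsg.tocobc tp ∈ (e.cfg t).chan a b := by
                  rw [h1.1, h1.2, hh]; exact List.mem_cons_of_mem _ h
                obtain ⟨h1', h2', s, hs, h3⟩ := ih.chanToco a b tp this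
                exact ⟨h1', h2', s, by omega, h3⟩
              · rcases List.mem_append.mp h with h' | h'
                · obtain ⟨h1', h2', s, hs, h3⟩ := ih.chanToco a b tp h'
                  exact ⟨h1', h2', s, by omega, h3⟩
                · simp at h'
              · obtain ⟨h1', h2', s, hs, h3⟩ := ih.chanToco a b tp h
                exact ⟨h1', h2', s, by omega, h3⟩
            · intro a b d s' h
              rw [hc] at h
              simp only [recvTocoCfg] at h
              split_ifs at h with h1 h2
              · have : PMsg.catchup d s' ∈ (e.cfg t).chan a b := by
                  rw [h1.1, h1.2, hh]; exact List.mem_cons_of_mem _ h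
                exact ih.chanCatch a b d s' this
              · rcases List.mem_append.mp h with h' | h'
                · exact ih.chanCatch a b d s' h'
                · obtain ⟨-, ha, hb⟩ := h2
                  subst ha
                  simp only [List.mem_singleton, PMsg.catchup.injEq] at h'
                  exact ⟨h'.2, hb⟩
              · exact ih.chanCatch a b d s' h
            · intro j tp h
              rw [hc] at h
              simp only [recvTocoCfg] at h
              by_cases hji : j = i
              · subst hji
                rw [Function.update_self] at h
                rcases Set.mem_insert_iff.mp h with h' | h'
                · subst h'
                  obtain ⟨h1, h2, s, hs, hl3, h4, h5⟩ := ih.chanToco j' j tp hmem0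
                  refine ⟨s, by omega, ?_, ?_, ?_⟩ <;> rw [h1] <;> assumption
                · obtain ⟨s, hs, h3⟩ := ih.pend j tp h'
                  exact ⟨s, by omega, h3⟩
              · rw [Function.update_of_ne hji] at h
                obtain ⟨s, hs, h3⟩ := ih.pend j tp h
                exact ⟨s, by omega, h3⟩
          · -- recvCatchup
            constructor
            · intro a b tp h
              rw [hc] at h
              simp only [recvCatchCfg] at h
              split_ifs at h with h1
              · have : PMsg.tocobc tp ∈ (e.cfg t).chan a b := by
                  rw [h1.1, h1.2, hh]; exact List.mem_cons_of_mem _ h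
                obtain ⟨h1', h2', s, hs, h3⟩ := ih.chanToco a b tp this
                exact ⟨h1', h2', s, by omega, h3⟩
              · obtain ⟨h1', h2', s, hs, h3⟩ := ih.chanToco a b tp h
                exact ⟨h1', h2', s, by omega, h3⟩
            · intro a b d s' h
              rw [hc] at h
              simp only [recvCatchCfg] at h
              split_ifs at h with h1
              · have : PMsg.catchup d s' ∈ (e.cfg t).chan a b := by
                  rw [h1.1, h1.2, hh]; exact List.mem_cons_of_mem _ h
                exact ih.chanCatch a b d s' this
              · exact ih.chanCatch a b d s' h
            · intro j tp h
              rw [hc] at h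
              simp only [recvCatchCfg] at h
              by_cases hji : j = i
              · subst hji
                rw [Function.update_self] at h
                obtain ⟨s, hs, h3⟩ := ih.pend j tp h
                exact ⟨s, by omega, h3⟩
              · rw [Function.update_of_ne hji] at h
                obtain ⟨s, hs, h3⟩ := ih.pend j tp h
                exact ⟨s, by omega, h3⟩
          · -- deliver
            constructor
            · intro a b tp h
              rw [hc] at h
              simp only [deliverCfg] at h
              obtain ⟨h1, h2, s, hs, h3⟩ := ih.chanToco a b tp h
              exact ⟨h1, h2, s, by omega, h3⟩
            · intro a b d s' h
              rw [hc] at h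
              simp only [deliverCfg] at h
              exact ih.chanCatch a b d s' h
            · intro j tp h
              rw [hc] at h
              simp only [deliverCfg] at h
              by_cases hji : j = i
              · subst hji
                rw [Function.update_self] at h
                obtain ⟨s, hs, h3⟩ := ih.pend j tp h.1
                exact ⟨s, by omega, h3⟩
              · rw [Function.update_of_ne hji] at h
                obtain ⟨s, hs, h3⟩ := ih.pend j tp h
                exact ⟨s, by omega, h3⟩

/-- Per-step monotonicity of `total_i[i]`, using well-formedness of channels. -/
lemma total_self_mono_step (e : Execution n M G) (t : ℕ) (i : Fin n) :
    ((e.cfg t).proc i).total i ≤ ((e.cfg (t + 1)).proc i).total i := by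
  have hw := wf_all e t
  cases hl : e.lbl t with
  | none => rw [cfg_eq_of_lbl_none e hl]
  | some l =>
      rcases (step_of_lbl e hl).inv with ⟨i0, m, rfl, hc⟩ | ⟨i0, j0, tp0, rest, rfl, hh, hc⟩ |
          ⟨i0, j0, d0, s0, rest, rfl, hh, hc⟩ | ⟨i0, tp0, rfl, hT2, hmin, hc⟩
      · rw [hc]
        by_cases hii : i = i0
        · subst hii
          simp [bcastCfg, Function.update_self]
        · simp [bcastCfg, Function.update_of_ne hii]
      · rw [hc]
        by_cases hii : i = i0
        · subst hii
          have hmem0 : PMsg.tocobc tp0 ∈ (e.cfg t).chan j0 i := by rw [hh]; simp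
          obtain ⟨hsend, hne, -⟩ := hw.chanToco j0 i tp0 hmem0
          have hsi : tp0.sender ≠ i := by rw [hsend]; exact fun h => hne h.symm
          simp only [recvTocoCfg, Function.update_self]
          split_ifs with hle
          · rw [Function.update_self]; omega
          · rw [Function.update_of_ne (Ne.symm hsi)]
        · simp [recvTocoCfg, Function.update_of_ne hii]
      · rw [hc]
        by_cases hii : i = i0
        · subst hii
          have hmem0 : PMsg.catchup d0 s0 ∈ (e.cfg t).chan j0 i := by rw [hh]; simp
          obtain ⟨hsend, hne⟩ := hw.chanCatch j0 i d0 s0 hmem0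
          have hsi : s0 ≠ i := by rw [hsend]; exact fun h => hne h.symm
          simp only [recvCatchCfg, Function.update_self]
          rw [Function.update_of_ne (Ne.symm hsi)]
        · simp [recvCatchCfg, Function.update_of_ne hii]
      · rw [hc]
        by_cases hii : i = i0
        · subst hii; simp [deliverCfg, Function.update_self]
        · simp [deliverCfg, Function.update_of_ne hii]

lemma total_self_mono (e : Execution n M G) {t t' : ℕ} (h : t ≤ t') (i : Fin n) :
    ((e.cfg t).proc i).total i ≤ ((e.cfg t').proc i).total i := by
  induction t', h using Nat.le_induction with
  | base => exact le_rfl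
  | succ t' _ ih => exact ih.trans (total_self_mono_step e t' i)

/-- Every occurrence of `y` in `L` is preceded by an occurrence of `x`. -/
def GoodL {α : Type*} (x y : α) (L : List α) : Prop :=
  ∀ L1 L2, L = L1 ++ y :: L2 → x ∈ L1

lemma list_snoc_decomp {α : Type*} {L L1 L2 : List α} {y x : α}
    (h : L ++ [x] = L1 ++ y :: L2) :
    (∃ L2', L = L1 ++ y :: L2' ∧ L2 = L2' ++ [x]) ∨ (L1 = L ∧ y = x ∧ L2 = []) := by
  rcases List.eq_nil_or_concat L2 with rfl | ⟨L2', b, rfl⟩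
  · obtain ⟨h1, h2⟩ := List.append_inj' h rfl
    simp only [List.cons.injEq] at h2
    exact Or.inr ⟨h1.symm, h2.1.symm, rfl⟩
  · have h' : L ++ [x] = (L1 ++ y :: L2') ++ [b] := by simpa using h
    obtain ⟨h1, h2⟩ := List.append_inj' h' rfl
    simp only [List.cons.injEq] at h2
    exact Or.inl ⟨L2', h1, by rw [h2.1]; simp⟩

lemma GoodL.snoc_other {α : Type*} {x y x' : α} {L : List α} (hne : x' ≠ y)
    (hg : GoodL x y L) : GoodL x y (L ++ [x']) := by
  intro L1 L2 h
  rcases list_snoc_decomp h with ⟨L2', h1, -⟩ | ⟨-, h2, -⟩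
  · exact hg L1 L2' h1
  · exact absurd h2.symm hne

lemma GoodL.snoc_self {α : Type*} {x y : α} {L : List α} (hy : y ∉ L) (hx : x ∈ L) :
    GoodL x y (L ++ [y]) := by
  intro L1 L2 h
  rcases list_snoc_decomp h with ⟨L2', h1, -⟩ | ⟨h1, -, -⟩
  · exact absurd (h1 ▸ (List.mem_append.mpr (Or.inr (List.mem_cons_self (a := y) (l := L2'))))) hy
  · exact h1 ▸ hx

lemma GoodL.cons_elim {α : Type*} {x y h : α} {L : List α} (hg : GoodL x y (h :: L))
    (hne : h ≠ x) : GoodL x y L := by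
  intro L1 L2 heq
  have := hg (h :: L1) L2 (by rw [heq]; rfl)
  rcases List.mem_cons.mp this with h' | h'
  · exact absurd h'.symm hne
  · exact h'

lemma GoodL.head_ne {α : Type*} {x y : α} {L : List α} (hg : GoodL x y (y :: L)) : False := by
  simpa using hg [] L rfl

lemma bcast_cfg (e : Execution n M G) {t : ℕ} {i : Fin n} {m : M}
    (h : e.lbl t = some (.broadcast i m)) :
    e.cfg (t + 1) = bcastCfg (e.cfg t) i m := by
  rcases (step_of_lbl e h).inv with ⟨i0, m0, heq, hc⟩ | ⟨_, _, _, _, heq, _⟩ |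
      ⟨_, _, _, _, _, heq, _⟩ | ⟨_, _, heq, _⟩ <;> cases heq
  exact hc

lemma deliver_inv (e : Execution n M G) {t : ℕ} {i : Fin n} {tp : Tuple n M}
    (h : e.lbl t = some (.deliver i tp)) :
    inT2 G (e.cfg t) i tp ∧
      (∀ tp', inT2 G (e.cfg t) i tp' → tsLe (tp.stot, tp.sender) (tp'.stot, tp'.sender)) := by
  rcases (step_of_lbl e h).inv with ⟨i0, m0, heq, hc⟩ | ⟨_, _, _, _, heq, _⟩ |
      ⟨_, _, _, _, _, heq, _⟩ | ⟨_, _, heq, hT2, hmin, _⟩ <;> cases heq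
  exact ⟨hT2, hmin⟩

/-- A `TOCOBC` protocol message, once in the channel from `p_i` to `p_j`, stays
there until it is received by `p_j` (and is `Handled` from then on). -/
lemma chan_or_handled (e : Execution n M G) {i j : Fin n} {tp1 : Tuple n M} {t0 : ℕ}
    (hbase : PMsg.tocobc tp1 ∈ (e.cfg t0).chan i j) :
    ∀ t, t0 ≤ t → PMsg.tocobc tp1 ∈ (e.cfg t).chan i j ∨ Handled e j tp1 t := by
  intro t ht
  induction t, ht using Nat.le_induction with
  | base => exact Or.inl hbase
  | succ t _ ih =>
      rcases ih with hmem | hh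
      · cases hl : e.lbl t with
        | none => rw [cfg_eq_of_lbl_none e hl]; exact Or.inl hmem
        | some l =>
            rcases (step_of_lbl e hl).inv with ⟨i0, m, rfl, hc⟩ |
                ⟨i0, j0, tp0, rest, rfl, hh0, hc⟩ |
                ⟨i0, j0, d0, s0, rest, rfl, hh0, hc⟩ | ⟨i0, tp0, rfl, hT2, hmin, hc⟩
            · left
              rw [hc]
              simp only [bcastCfg]
              split_ifs with h1
              · exact List.mem_append_left _ hmem
              · exact hmem
            · rw [hc]
              simp only [recvTocoCfg]
              split_ifs with h1 h2
              · -- the channel i → j is popped, and p_j receives the head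
                obtain ⟨hij0, hji0⟩ := h1
                have hchan : (e.cfg t).chan i j = PMsg.tocobc tp0 :: rest := by
                  rw [hij0, hji0]; exact hh0
                rw [hchan] at hmem
                rcases List.mem_cons.mp hmem with h' | h'
                · -- tp1 is the received tuple: it enters pending_j
                  right
                  left
                  have htp : tp1 = tp0 := by injection h'
                  subst htp
                  rw [hji0, hc]
                  simp [recvTocoCfg, Function.update_self]
                · exact Or.inl h'
              · exact Or.inl (List.mem_append_left _ hmem)
              · exact Or.inl hmem
            · rw [hc]
              simp only [recvCatchCfg]
              split_ifs with h1
              · obtain ⟨hij0, hji0⟩ := h1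
                have hchan : (e.cfg t).chan i j = PMsg.catchup d0 s0 :: rest := by
                  rw [hij0, hji0]; exact hh0
                rw [hchan] at hmem
                rcases List.mem_cons.mp hmem with h' | h'
                · exact absurd h' (by simp)
                · exact Or.inl h'
              · exact Or.inl hmem
            · left
              rw [hc]
              exact hmem
      · exact Or.inr hh.step

/-- Main FIFO invariant: at any time after `m2` is broadcast, either `p_j` has
already received `tp1`, or `tp2` has not reached `pending_j` and every occurrence
of `tp2` in the channel `i → j` is preceded by `tp1`. -/
lemma fifo_inv (e : Execution n M G) {i j : Fin n} (hji : j ≠ i) {m1 m2 : M}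
    {t1 t2 : ℕ} (h12 : t1 < t2)
    (hb1 : e.lbl t1 = some (.broadcast i m1)) (hb2 : e.lbl t2 = some (.broadcast i m2))
    {tp1 tp2 : Tuple n M}
    (ht1 : tp1 = ⟨m1, ((e.cfg t1).proc i).causal, ((e.cfg t1).proc i).total i + 1, i⟩)
    (ht2 : tp2 = ⟨m2, ((e.cfg t2).proc i).causal, ((e.cfg t2).proc i).total i + 1, i⟩) :
    ∀ t, t2 + 1 ≤ t →
      Handled e j tp1 t ∨ (tp2 ∉ ((e.cfg t).proc j).pending ∧
        GoodL (PMsg.tocobc tp1) (PMsg.tocobc tp2) ((e.cfg t).chan i j)) := by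
  have hsend2 : tp2.sender = i := by rw [ht2]
  have hmsg2 : tp2.msg = m2 := by rw [ht2]
  -- tp2 is nowhere at time t2
  have hnp2 : tp2 ∉ ((e.cfg t2).proc j).pending := by
    intro hmem
    obtain ⟨s, hs, hl3, -⟩ := (wf_all e t2).pend j tp2 hmem
    rw [hsend2, hmsg2] at hl3
    have := e.uniqueBcast m2 i i s t2 hl3 hb2
    omega
  have hnc2 : PMsg.tocobc tp2 ∉ (e.cfg t2).chan i j := by
    intro hmem
    obtain ⟨h1, h2, s, hs, hl3, -⟩ := (wf_all e t2).chanToco i j tp2 hmem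
    rw [hmsg2] at hl3
    have := e.uniqueBcast m2 i i s t2 hl3 hb2
    omega
  -- tp1 is in the channel i → j at time t1 + 1
  have hbase1 : PMsg.tocobc tp1 ∈ (e.cfg (t1 + 1)).chan i j := by
    rw [bcast_cfg e hb1, ht1]
    simp [bcastCfg, hji]
  have hK := chan_or_handled e hbase1 t2 (by omega)
  -- configuration after broadcasting m2
  have hc2 := bcast_cfg e hb2
  intro t ht
  induction t, ht using Nat.le_induction with
  | base =>
      rcases hK with hmem | hh
      · right
        constructor
        · rw [hc2]
          simp only [bcastCfg]
          rw [Function.update_of_ne hji]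
          exact hnp2
        · have hch : (bcastCfg (e.cfg t2) i m2).chan i j
              = (e.cfg t2).chan i j ++ [PMsg.tocobc tp2] := by
            rw [ht2]; simp [bcastCfg, hji]
          rw [hc2, hch]
          exact GoodL.snoc_self hnc2 hmem
      · exact Or.inl hh.step
  | succ t ht ih =>
      rcases ih with hh | ⟨hnp, hg⟩
      · exact Or.inl hh.step
      cases hl : e.lbl t with
      | none =>
          right
          rw [cfg_eq_of_lbl_none e hl]
          exact ⟨hnp, hg⟩
      | some l =>
          rcases (step_of_lbl e hl).inv with ⟨i0, m, rfl, hc⟩ |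
              ⟨i0, j0, tp0, rest, rfl, hh0, hc⟩ |
              ⟨i0, j0, d0, s0, rest, rfl, hh0, hc⟩ | ⟨i0, tp0, rfl, hT2, hmin, hc⟩
          · -- broadcast by some process i0
            right
            rw [hc]
            constructor
            · simp only [bcastCfg]
              by_cases hji0 : j = i0
              · subst hji0
                rw [Function.update_self]
                intro hmem
                rcases Set.mem_insert_iff.mp hmem with h' | h'
                · have : tp2.sender = j := by rw [h']
                  rw [hsend2] at this
                  exact hji this.symm
                · exact hnp h'
              · rw [Function.update_of_ne hji0]
                exact hnp
            · simp only [bcastCfg]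
              split_ifs with h1
              · refine GoodL.snoc_other ?_ hg
                intro hEq
                have htp : (⟨m, ((e.cfg t).proc i0).causal,
                    ((e.cfg t).proc i0).total i0 + 1, i0⟩ : Tuple n M) = tp2 := by
                  injection hEq
                have hmEq : m = m2 := by rw [← hmsg2, ← htp]
                subst hmEq
                have := e.uniqueBcast m i0 i t t2 hl hb2
                omega
              · exact hg
          · -- reception of a TOCOBC message
            by_cases hpop : i = j0 ∧ j = i0
            · obtain ⟨hij0, hji0⟩ := hpop
              have hchan : (e.cfg t).chan i j = PMsg.tocobc tp0 :: rest := by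
                rw [hij0, hji0]; exact hh0
              rw [hchan] at hg
              have htp02 : tp0 ≠ tp2 := by
                intro h'
                subst h'
                exact hg.head_ne
              by_cases htp01 : tp0 = tp1
              · -- tp1 is received: it enters pending_j
                subst htp01
                left
                left
                rw [hji0, hc]
                simp [recvTocoCfg, Function.update_self]
              · right
                constructor
                · rw [hc]
                  simp only [recvTocoCfg]
                  rw [hji0, Function.update_self]
                  intro hmem
                  rcases Set.mem_insert_iff.mp hmem with h' | h'
                  · exact htp02 h'.symm
                  · exact hnp (by rw [hji0]; exact h')
                · have hch : (recvTocoCfg (e.cfg t) i0 j0 tp0 rest).chan i j = rest := by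
                    simp [recvTocoCfg, hij0, hji0]
                  rw [hc, hch]
                  exact hg.cons_elim (fun h' => htp01 (by injection h'))
            · by_cases hji0 : j = i0
              · -- p_j receives a TOCOBC message from j0 ≠ i
                have hij0 : i ≠ j0 := fun h' => hpop ⟨h', hji0⟩
                right
                constructor
                · rw [hc]
                  simp only [recvTocoCfg]
                  rw [hji0, Function.update_self]
                  intro hmem
                  rcases Set.mem_insert_iff.mp hmem with h' | h'
                  · obtain ⟨hs0, -⟩ := (wf_all e t).chanToco j0 i0 tp0
                      (by rw [hh0]; simp)
                    rw [← h', hsend2] at hs0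
                    exact hij0 hs0
                  · exact hnp (by rw [hji0]; exact h')
                · have hch : (recvTocoCfg (e.cfg t) i0 j0 tp0 rest).chan i j
                      = (e.cfg t).chan i j := by
                    simp [recvTocoCfg, hij0, hji0]
                  rw [hc, hch]
                  exact hg
              · -- a process other than p_j receives
                right
                constructor
                · rw [hc]
                  simp only [recvTocoCfg]
                  rw [Function.update_of_ne hji0]
                  exact hnp
                · rw [hc]
                  simp only [recvTocoCfg]
                  split_ifs with h1 h2
                  all_goals first
                    | exact absurd h1 hpop
                    | exact absurd h1.2.2 hji0
                    | exact GoodL.snoc_other (by simp) hg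
                    | exact hg
          · -- reception of a CATCH_UP message
            right
            constructor
            · rw [hc]
              simp only [recvCatchCfg]
              by_cases hji0 : j = i0
              · rw [hji0, Function.update_self]
                exact fun h' => hnp (by rw [hji0]; exact h')
              · rw [Function.update_of_ne hji0]
                exact hnp
            · rw [hc]
              simp only [recvCatchCfg]
              split_ifs with h1
              · have hchan : (e.cfg t).chan i j = PMsg.catchup d0 s0 :: rest := by
                  rw [h1.1, h1.2]; exact hh0
                rw [hchan] at hg
                exact hg.cons_elim (by simp)
              · exact hg
          · -- a delivery
            right
            constructor
            · rw [hc]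
              simp only [deliverCfg]
              by_cases hji0 : j = i0
              · rw [hji0, Function.update_self]
                intro hmem
                exact hnp (by rw [hji0]; exact hmem.1)
              · rw [Function.update_of_ne hji0]
                exact hnp
            · rw [hc]
              simp only [deliverCfg]
              exact hg

theorem same_sender_delivery_order' {n : ℕ} {M : Type} {G : SimpleGraph (Fin n)}
    (e : Execution n M G) :
    ∀ (i j : Fin n) (m1 m2 : M) (t1 t2 td : ℕ), t1 < t2 →
      e.broadcastsAt i m1 t1 → e.broadcastsAt i m2 t2 → e.deliversAt j m2 td →
      ∃ td', td' < td ∧ e.deliversAt j m1 td' := by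
  intro i j m1 m2 t1 t2 td h12 hb1 hb2 hdel
  obtain ⟨tp, htpm, hld⟩ := hdel
  set tp1 : Tuple n M := ⟨m1, ((e.cfg t1).proc i).causal,
    ((e.cfg t1).proc i).total i + 1, i⟩ with ht1
  set tp2 : Tuple n M := ⟨m2, ((e.cfg t2).proc i).causal,
    ((e.cfg t2).proc i).total i + 1, i⟩ with ht2
  obtain ⟨hT2, hmin⟩ := deliver_inv e hld
  have hpend : tp ∈ ((e.cfg td).proc j).pending := hT2.1.1.1
  -- identify the delivered tuple with tp2
  obtain ⟨s, hs, hl3, hsc, hst⟩ := (wf_all e td).pend j tp hpend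
  rw [htpm] at hl3
  have hseq : s = t2 := e.uniqueBcast m2 tp.sender i s t2 hl3 hb2
  rw [hseq] at hs hl3 hsc hst
  rw [hb2] at hl3
  have hsender : tp.sender = i := by
    injection hl3 with h'
    injection h' with h1 h2
    exact h1.symm
  rw [hsender] at hsc hst
  have htp : tp = tp2 := by
    obtain ⟨ms, sc, st, sd⟩ := tp
    obtain rfl : sd = i := hsender
    obtain rfl : ms = m2 := htpm
    rw [ht2, Tuple.mk.injEq]
    exact ⟨rfl, hsc, hst, rfl⟩
  rw [htp] at hpend hT2 hmin
  have htd : t2 < td := hs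
  -- tp1 has a strictly smaller total timestamp than tp2
  have hstep1 : ((e.cfg (t1 + 1)).proc i).total i = ((e.cfg t1).proc i).total i + 1 := by
    rw [bcast_cfg e hb1]
    simp [bcastCfg]
  have hmono := total_self_mono e (show t1 + 1 ≤ t2 by omega) i
  rw [hstep1] at hmono
  have hlt : tp1.stot < tp2.stot := by
    rw [ht1, ht2]
    simpa using by omega
  -- tp1 has a pointwise smaller causal timestamp than tp2
  have hscle : ∀ k, tp1.scaus k ≤ tp2.scaus k := by
    intro k
    rw [ht1, ht2]
    exact causal_mono e h12.le i k
  -- p_j has received tp1 by time td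
  have hhd : Handled e j tp1 td := by
    by_cases hji : j = i
    · subst hji
      have hmem1 : tp1 ∈ ((e.cfg (t1 + 1)).proc j).pending := by
        rw [bcast_cfg e hb1, ht1]
        simp [bcastCfg]
      exact Handled.mono (by omega) (Or.inl hmem1)
    · rcases fifo_inv e hji h12 hb1 hb2 ht1 ht2 td (by omega) with hh | ⟨hnp, -⟩
      · exact hh
      · exact absurd hpend hnp
  rcases hhd with hmem1 | ⟨td', htd', hld1⟩
  · -- tp1 cannot still be pending: it would contradict the delivery of tp2
    exfalso
    obtain ⟨⟨⟨hp2, hcaus2⟩, hT1a⟩, hT2a⟩ := hT2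
    have hsd : tp1.sender = tp2.sender := by rw [ht1, ht2]
    have hT2' : inT2 G (e.cfg td) j tp1 := by
      refine ⟨⟨⟨hmem1, fun k => (hscle k).trans (hcaus2 k)⟩, ?_⟩, ?_⟩
      · intro k hk
        rw [hsd] at hk
        have h' := hT1a k hk
        have : tsLt (tp1.stot, tp2.sender) (((e.cfg td).proc j).total k, k) :=
          tsLt_of_lt_of_tsLt hlt h'
        rwa [← hsd] at this
      · intro tp' hp' hadj
        rw [hsd] at hadj
        have h' := hT2a tp' hp' hadj
        have : tsLt (tp1.stot, tp2.sender) (tp'.stot, tp'.sender) :=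
          tsLt_of_lt_of_tsLt hlt h'
        rwa [← hsd] at this
    have hcontra := hmin tp1 hT2'
    rcases hcontra with hltc | heqc
    · rcases hltc with h' | ⟨h', -⟩
      · simp only at h'
        omega
      · simp only at h'
        omega
    · have : tp2.stot = tp1.stot := congrArg Prod.fst heqc
      omega
  · exact ⟨td', htd', tp1, by rw [ht1], hld1⟩


/-- **Same-sender delivery Lemma (Lemma 4 of the paper).**  In any execution of
Algorithm 1, if a process `p_i` toco-broadcasts `m1` and later toco-broadcasts
`m2`, then any process `p_j` that toco-delivers `m2` must have toco-delivered
`m1` before `m2`. -/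
theorem same_sender_delivery_order {n : ℕ} {M : Type} {G : SimpleGraph (Fin n)}
    (e : Execution n M G) :
    ∀ (i j : Fin n) (m1 m2 : M) (t1 t2 td : ℕ), t1 < t2 →
      e.broadcastsAt i m1 t1 → e.broadcastsAt i m2 t2 → e.deliversAt j m2 td →
      ∃ td', td' < td ∧ e.deliversAt j m1 td' :=
  same_sender_delivery_order' e

end Fisheye
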